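/- Let K be a discrete valued field with valuation ring R_K and maximal ideal m_K, let n ≥ 1, and set R := R_K/m_K^n. Let M be a free R-module of rank 1 and ε : M → R an R-module homomorphism whose image is the maximal ideal m_K/m_K^n of R. Then there is an R-module isomorphism η : M → m_K/m_K^{n+1} such that ε_n ∘ η = ε, where ε_n : m_K/m_K^{n+1} → R_K/m_K^n is the R-module homomorphism induced by the inclusion m_K ⊆ R_K. (In other words, every Deligne triple of the form (R_n(K), M, ε) is isomorphic to the triple T_n(K) = (R_n(K), m_K/m_K^{n+1}, ε_n).) -/

import Mathlib

open Multiplicative WithZero Filter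

noncomputable section

/-- The multiplicative value group `ℚₘ₀` used for normalized valuations:
`expQ q` corresponds to the additive value `q`. -/
abbrev QM0 : Type := WithZero (Multiplicative ℚ)

/-- `expQ q` is the element of `ℚₘ₀` corresponding to the additive value `q`
(so that `v x = expQ q` means `ν(x) = q` additively). -/
def expQ (q : ℚ) : QM0 := ((Multiplicative.ofAdd (-q) : Multiplicative ℚ) : QM0)

section Hyper

variable {K : Type*} [Field K] {Γ₀ : Type*} [LinearOrderedCommGroupWithZero Γ₀]

/-- `hrel v γ a b` says that `b` belongs to the coset `a·(1+𝔪^γ)`,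
where `𝔪^γ = {x : ν(x) > γ}` (multiplicatively: `v x < γ`). -/
def hrel (v : Valuation K Γ₀) (γ : Γ₀) (a b : K) : Prop :=
  ∃ u : K, v (u - 1) < γ ∧ b = a * u

/-- The coset `a·(1+𝔪^γ)` as a subset of `K`. -/
def coset (v : Valuation K Γ₀) (γ : Γ₀) (a : K) : Set K := {b | hrel v γ a b}

/-- `hsumMem v γ a b c` says `[c] ∈ [a] + [b]` in the valued hyperfield `H_γ(K)`. -/
def hsumMem (v : Valuation K Γ₀) (γ : Γ₀) (a b c : K) : Prop :=
  ∃ x y : K, hrel v γ a x ∧ hrel v γ b y ∧ hrel v γ (x + y) c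

/-- The valued hyperfield `H_γ(K) = K/(1+𝔪^γ)`. -/
def Hyp (v : Valuation K Γ₀) (γ : Γ₀) : Type _ := Quot (hrel v γ)

/-- The class `[a]_γ ∈ H_γ(K)`. -/
def hmk (v : Valuation K Γ₀) (γ : Γ₀) (a : K) : Hyp v γ := Quot.mk _ a

end Hyper

section HypHom

variable {K₁ K₂ : Type*} [Field K₁] [Field K₂]
variable {Γ₁ Γ₂ : Type*} [LinearOrderedCommGroupWithZero Γ₁] [LinearOrderedCommGroupWithZero Γ₂]

/-- A homomorphism of valued hyperfields `H_γ(K₁) → H_δ(K₂)`: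
`f([0]) = [0]`, `f([1]) = [1]`, `f` is multiplicative, `f(α + β) ⊆ f(α) + f(β)`
and `ν(α) ≤ ν(β) ↔ ν(f α) ≤ ν(f β)` (stated here multiplicatively). -/
structure HypHom (v₁ : Valuation K₁ Γ₁) (γ : Γ₁) (v₂ : Valuation K₂ Γ₂) (δ : Γ₂) where
  toFun : Hyp v₁ γ → Hyp v₂ δ
  map_zero' : toFun (hmk v₁ γ 0) = hmk v₂ δ 0
  map_one' : toFun (hmk v₁ γ 1) = hmk v₂ δ 1
  map_mul' : ∀ (a b : K₁) (a' b' : K₂), toFun (hmk v₁ γ a) = hmk v₂ δ a' →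
    toFun (hmk v₁ γ b) = hmk v₂ δ b' → toFun (hmk v₁ γ (a * b)) = hmk v₂ δ (a' * b')
  map_hsum' : ∀ (a b c : K₁) (a' b' c' : K₂), toFun (hmk v₁ γ a) = hmk v₂ δ a' →
    toFun (hmk v₁ γ b) = hmk v₂ δ b' → toFun (hmk v₁ γ c) = hmk v₂ δ c' →
    hsumMem v₁ γ a b c → hsumMem v₂ δ a' b' c'
  val_le_iff' : ∀ (a b : K₁) (a' b' : K₂), toFun (hmk v₁ γ a) = hmk v₂ δ a' →
    toFun (hmk v₁ γ b) = hmk v₂ δ b' → (v₁ a ≤ v₁ b ↔ v₂ a' ≤ v₂ b')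

/-- A homomorphism of valued hyperfields is *over `p`* if `f([p]) = [p]`. -/
def HypHom.OverP {v₁ : Valuation K₁ Γ₁} {γ : Γ₁} {v₂ : Valuation K₂ Γ₂} {δ : Γ₂}
    (p : ℕ) (f : HypHom v₁ γ v₂ δ) : Prop :=
  f.toFun (hmk v₁ γ (p : K₁)) = hmk v₂ δ (p : K₂)

end HypHom

section CDVF

variable (K : Type*) [Field K] [Valued K QM0]

/-- `K` is a complete discrete valued field of mixed characteristic `(0,p)` with
perfect residue field and ramification index `e`, with the valuation normalized so
that `ν(p) = 1` and `ν(K^×) = (1/e)ℤ`.  Perfectness of the residue field is expressed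
as surjectivity of the Frobenius on residues. -/
structure IsCompleteDVF (p e : ℕ) : Prop where
  prime : p.Prime
  charZero : CharZero K
  complete : CompleteSpace K
  epos : 0 < e
  v_p : Valued.v (p : K) = expQ 1
  discrete : ∀ x : K, x ≠ 0 → ∃ k : ℤ, Valued.v x = expQ ((k : ℚ) / e)
  exists_unif : ∃ π : K, Valued.v π = expQ (1 / e)
  perfectResidue : ∀ x : K, Valued.v x ≤ 1 → ∃ y : K, Valued.v y ≤ 1 ∧ Valued.v (x - y ^ p) < 1

/-- The cut-off value for the `n`-th valued hyperfield `H_n(K) = K/(1+𝔪^n)`: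
`𝔪^n = {x : ν(x) > (n-1)/e}` when the ramification index is `e` and `ν(p) = 1`. -/
def hnγ (e n : ℕ) : QM0 := expQ (((n : ℚ) - 1) / e)

/-- The set of Teichmüller representatives: elements of the valuation ring which are
`p^s`-th powers in the valuation ring for every `s`. -/
def Teich (p : ℕ) : Set K :=
  {a | Valued.v a ≤ 1 ∧ ∀ s : ℕ, ∃ b : K, Valued.v b ≤ 1 ∧ b ^ p ^ s = a}

/-- The Witt subring of `K`: the set of (convergent) sums `Σ s_k p^k` with all
`s_k` Teichmüller representatives. -/
def WittPart (p : ℕ) : Set K :=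
  {x | ∃ s : ℕ → K, (∀ k, s k ∈ Teich K p) ∧
    Tendsto (fun n => ∑ k ∈ Finset.range n, s k * (p : K) ^ k) atTop (nhds x)}

end CDVF

section Statement14

set_option synthInstance.maxHeartbeats 1000000
set_option maxHeartbeats 1000000

/-- Additive-integer-valued value group. -/
abbrev ZM0 : Type := WithZero (Multiplicative ℤ)

/-- `expZ k` corresponds to the additive value `k ∈ ℤ`. -/
def expZ (k : ℤ) : ZM0 := ((Multiplicative.ofAdd (-k) : Multiplicative ℤ) : ZM0)

variable {K : Type*} [Field K] (v : Valuation K ZM0) (n : ℕ)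

/-- The maximal ideal of the valuation ring. -/
def mIdeal : Ideal v.valuationSubring :=
  IsLocalRing.maximalIdeal v.valuationSubring

/-- The `n`-th residue ring `R_n(K) = R_K/𝔪_K^n`. -/
abbrev ResRing : Type _ := v.valuationSubring ⧸ (mIdeal v) ^ n

/-- The module `𝔪_K/𝔪_K^{n+1}`. -/
abbrev MModule : Type _ :=
  ↥(mIdeal v) ⧸ (Submodule.comap (mIdeal v).subtype ((mIdeal v) ^ (n + 1)))

theorem mModule_torsion :
    Module.IsTorsionBySet v.valuationSubring (MModule v n) ↑((mIdeal v) ^ n) := by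
  intro x a
  obtain ⟨y, rfl⟩ := Submodule.Quotient.mk_surjective _ x
  rw [← Submodule.Quotient.mk_smul]
  rw [Submodule.Quotient.mk_eq_zero]
  rw [Submodule.mem_comap]
  show (a : v.valuationSubring) * (y : v.valuationSubring) ∈ (mIdeal v) ^ (n + 1)
  rw [pow_succ]
  exact Ideal.mul_mem_mul a.2 y.2

/-- `𝔪_K/𝔪_K^{n+1}` as a module over `R_n(K) = R_K/𝔪^n`. -/
noncomputable instance : Module (ResRing v n) (MModule v n) :=
  (mModule_torsion v n).module

/-- The map `ε_n : 𝔪_K/𝔪_K^{n+1} → R_K/𝔪_K^n` induced by the inclusion `𝔪_K ⊆ R_K`. -/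
noncomputable def epsN : MModule v n →ₗ[v.valuationSubring] ResRing v n :=
  Submodule.liftQ _ (((mIdeal v ^ n : Ideal v.valuationSubring).mkQ).comp (mIdeal v).subtype)
    (by
      intro x hx
      rw [Submodule.mem_comap] at hx
      simp only [LinearMap.mem_ker, LinearMap.comp_apply, Submodule.mkQ_apply,
        Submodule.Quotient.mk_eq_zero]
      exact Ideal.pow_le_pow_right (Nat.le_succ n) hx)

lemma expZ_zero : expZ 0 = 1 := rfl
lemma expZ_add (a b : ℤ) : expZ (a + b) = expZ a * expZ b := by
  rw [expZ, expZ, expZ, ← WithZero.coe_mul, ← ofAdd_add]; ring_nf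
lemma expZ_ne_zero (a : ℤ) : expZ a ≠ 0 := WithZero.coe_ne_zero
lemma expZ_le_expZ {a b : ℤ} : expZ a ≤ expZ b ↔ b ≤ a := by
  rw [expZ, expZ, WithZero.coe_le_coe, Multiplicative.ofAdd_le]; omega
lemma lt_expZ_iff {x : ZM0} (k : ℤ) : x < expZ k ↔ x ≤ expZ (k + 1) := by
  induction x using WithZero.recZeroCoe with
  | zero =>
    constructor <;> intro _
    · exact WithZero.zero_le _
    · exact zero_lt_iff.mpr (expZ_ne_zero k)
  | coe m =>
    rw [expZ, expZ, WithZero.coe_lt_coe, WithZero.coe_le_coe,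
      show m < ofAdd (-k) ↔ toAdd m < -k from Iff.rfl,
      show m ≤ ofAdd (-(k+1)) ↔ toAdd m ≤ -(k+1) from Iff.rfl]
    omega

lemma expZ_lt_expZ {a b : ℤ} : expZ a < expZ b ↔ b < a := by
  rw [expZ, expZ, WithZero.coe_lt_coe,
    show ofAdd (-a) < ofAdd (-b) ↔ -a < -b from Iff.rfl]; omega
lemma expZ_pow (k : ℕ) : expZ 1 ^ k = expZ k := by
  induction k with
  | zero => rfl
  | succ m ih => rw [pow_succ, ih, ← expZ_add]; norm_num

section Main
variable {K : Type*} [Field K] (v : Valuation K ZM0)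

lemma isUnit_iff_v_eq_one (x : v.valuationSubring) : IsUnit x ↔ v (x:K) = 1 := by
  constructor
  · rintro ⟨u, rfl⟩
    have h : ((u : v.valuationSubring) : K) * (((u⁻¹ : _ˣ) : v.valuationSubring) : K) = 1 := by
      norm_cast
      simp
    have := congrArg v h
    rw [map_mul, map_one] at this
    have h1 : v ((u : v.valuationSubring) : K) ≤ 1 := (u : v.valuationSubring).2
    have h2 : v (((u⁻¹ : _ˣ) : v.valuationSubring) : K) ≤ 1 := ((u⁻¹ : _ˣ) : v.valuationSubring).2
    have := le_antisymm h1 (by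
      calc (1 : ZM0) = _ * _ := this.symm
        _ ≤ v ((u : v.valuationSubring) : K) * 1 := mul_le_mul_right h2 _
        _ = _ := mul_one _)
    exact this
  · intro hx
    have hx0 : (x : K) ≠ 0 := by
      intro h; rw [h, map_zero] at hx; exact zero_ne_one hx
    have hinv : v (x : K)⁻¹ ≤ 1 := by rw [map_inv₀, hx]; norm_num
    refine IsUnit.of_mul_eq_one (a := x) ⟨(x:K)⁻¹, hinv⟩ ?_
    ext
    push_cast
    exact mul_inv_cancel₀ hx0

lemma mem_mIdeal_iff (x : v.valuationSubring) : x ∈ mIdeal v ↔ v (x:K) < 1 := by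
  rw [mIdeal, IsLocalRing.mem_maximalIdeal, mem_nonunits_iff, isUnit_iff_v_eq_one]
  exact ⟨fun h => lt_of_le_of_ne x.2 h, fun h => ne_of_lt h⟩

variable {v} (πR : v.valuationSubring) (hπ : v (πR : K) = expZ 1)
include hπ

lemma pi_ne_zero : (πR : K) ≠ 0 := by
  intro h; rw [h, map_zero] at hπ; exact (expZ_ne_zero 1) hπ.symm

lemma mIdeal_eq_span : mIdeal v = Ideal.span {πR} := by
  apply le_antisymm
  · intro x hx
    rw [mem_mIdeal_iff] at hx
    rw [← expZ_zero, lt_expZ_iff] at hx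
    norm_num at hx
    rw [Ideal.mem_span_singleton']
    refine ⟨⟨(x:K) * (πR:K)⁻¹, ?_⟩, ?_⟩
    · rw [Valuation.mem_valuationSubring_iff, map_mul, map_inv₀, hπ]
      calc v (x:K) * (expZ 1)⁻¹ ≤ expZ 1 * (expZ 1)⁻¹ := mul_le_mul_left hx _
        _ = 1 := mul_inv_cancel₀ (expZ_ne_zero 1)
    · ext
      push_cast
      field_simp [pi_ne_zero πR hπ]
  · rw [Ideal.span_le, Set.singleton_subset_iff, SetLike.mem_coe, mem_mIdeal_iff, hπ,
      ← expZ_zero, expZ_lt_expZ]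
    norm_num

lemma mem_pow_iff (k : ℕ) (x : v.valuationSubring) :
    x ∈ (mIdeal v) ^ k ↔ v (x:K) ≤ expZ k := by
  rw [mIdeal_eq_span πR hπ, Ideal.span_singleton_pow, Ideal.mem_span_singleton']
  constructor
  · rintro ⟨c, rfl⟩
    push_cast
    rw [map_mul, map_pow, hπ, expZ_pow]
    calc v (c:K) * expZ k ≤ 1 * expZ k := mul_le_mul_left c.2 _
      _ = expZ k := one_mul _
  · intro h
    refine ⟨⟨(x:K) * ((πR:K)⁻¹) ^ k, ?_⟩, ?_⟩
    · rw [Valuation.mem_valuationSubring_iff, map_mul, map_pow, map_inv₀, hπ,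
        inv_pow, expZ_pow]
      calc v (x:K) * (expZ k)⁻¹ ≤ expZ k * (expZ k)⁻¹ := mul_le_mul_left h _
        _ = 1 := mul_inv_cancel₀ (expZ_ne_zero k)
    · ext
      push_cast
      field_simp [pi_ne_zero πR hπ]
      rw [one_div, inv_pow, mul_assoc, inv_mul_cancel₀ (pow_ne_zero _ (pi_ne_zero πR hπ)), mul_one]

end Main

/-- Let `K` be a discrete valued field with valuation ring `R_K` and
maximal ideal `𝔪_K`, let `n ≥ 1`, and set `R := R_K/𝔪_K^n`.  Let `M` be a free
`R`-module of rank 1 and `ε : M → R` an `R`-module homomorphism whose image is the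
maximal ideal `𝔪_K/𝔪_K^n` of `R`.  Then there is an `R`-module isomorphism
`η : M ≃ 𝔪_K/𝔪_K^{n+1}` with `ε_n ∘ η = ε`; i.e. every Deligne triple of the form
`(R_n(K), M, ε)` is isomorphic to `T_n(K)`. -/
theorem statement14 {K : Type*} [Field K] (v : Valuation K ZM0)
    (hdisc : ∃ π : K, v π = expZ 1) (n : ℕ) (hn : 1 ≤ n)
    (M : Type*) [AddCommGroup M] [Module (ResRing v n) M]
    (hfree : Nonempty (Module.Basis (Fin 1) (ResRing v n) M))
    (ε : M →ₗ[ResRing v n] ResRing v n)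
    (hε : LinearMap.range ε =
      (Ideal.map (Ideal.Quotient.mk ((mIdeal v) ^ n)) (mIdeal v) : Ideal (ResRing v n))) :
    ∃ η : M ≃ₗ[ResRing v n] MModule v n, ∀ x : M, epsN v n (η x) = ε x := by
  classical
  obtain ⟨π, hπK⟩ := hdisc
  have hπle : v π ≤ 1 := by rw [hπK, ← expZ_zero, expZ_le_expZ]; norm_num
  set πR : v.valuationSubring := ⟨π, hπle⟩ with hπRdef
  have hπ : v (πR : K) = expZ 1 := hπK
  have hπmem : πR ∈ mIdeal v := by
    rw [mem_mIdeal_iff, hπ, ← expZ_zero, expZ_lt_expZ]; norm_num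
  obtain ⟨b⟩ := hfree
  set mk : v.valuationSubring →+* ResRing v n := Ideal.Quotient.mk ((mIdeal v) ^ n) with hmkdef
  set e : M := b 0 with hedef
  -- every x : M is (b.repr x 0) • e
  have hx_eq : ∀ x : M, x = b.repr x 0 • e := by
    intro x
    conv_lhs => rw [← b.sum_repr x]
    rw [Fin.sum_univ_one]
  -- range ε = span {ε e}
  have hrange : LinearMap.range ε = Submodule.span (ResRing v n) {ε e} := by
    rw [LinearMap.range_eq_map, ← b.span_eq, Set.range_unique,
      Submodule.map_span, Set.image_singleton]
    rfl
  have hmapm : (Ideal.map mk (mIdeal v) : Ideal (ResRing v n)) = Ideal.span {mk πR} := by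
    have h := congrArg (Ideal.map mk) (mIdeal_eq_span πR hπ)
    rw [h, Ideal.map_span, Set.image_singleton]
  have hspan_eq : Submodule.span (ResRing v n) {ε e} = Ideal.span {mk πR} := by
    rw [← hrange, hε, hmapm]
  -- Step 1: find d with v d = 1 and ε e = mk (d * πR)
  obtain ⟨d, hd1, hd2⟩ :
      ∃ d : v.valuationSubring, v (d : K) = 1 ∧ ε e = mk (d * πR) := by
    by_cases hz : mk πR = 0
    · refine ⟨1, map_one v, ?_⟩
      have hεe : ε e ∈ Ideal.span {mk πR} := by
        rw [← hspan_eq]; exact Submodule.mem_span_singleton_self _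
      rw [hz, Ideal.span_singleton_eq_bot.mpr rfl, Ideal.mem_bot] at hεe
      rw [hεe, one_mul, hz]
    · -- n ≥ 2
      have hn2 : 2 ≤ n := by
        by_contra h
        apply hz
        have hn1 : n = 1 := by omega
        rw [hmkdef, Ideal.Quotient.eq_zero_iff_mem, mem_pow_iff πR hπ, hπ, expZ_le_expZ]
        omega
      have h1 : ε e ∈ Ideal.span {mk πR} := by
        rw [← hspan_eq]; exact Submodule.mem_span_singleton_self _
      have h2 : mk πR ∈ Submodule.span (ResRing v n) {ε e} := by
        rw [hspan_eq]; exact Submodule.mem_span_singleton_self _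
      rw [Ideal.mem_span_singleton'] at h1
      rw [Submodule.mem_span_singleton] at h2
      obtain ⟨s, hs⟩ := h1
      obtain ⟨t, ht⟩ := h2
      obtain ⟨s', rfl⟩ := Ideal.Quotient.mk_surjective s
      obtain ⟨t', rfl⟩ := Ideal.Quotient.mk_surjective t
      rw [smul_eq_mul] at ht
      have key0 : mk πR * (1 - mk t' * mk s') = 0 := by
        have h3 : mk t' * (mk s' * mk πR) = mk πR := by rw [hs]; exact ht
        linear_combination -h3
      have key : (πR * (1 - t' * s')) ∈ (mIdeal v) ^ n := by
        rw [← Ideal.Quotient.eq_zero_iff_mem, ← hmkdef, map_mul, map_sub, map_one, map_mul]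
        exact key0
      rw [mem_pow_iff πR hπ] at key
      push_cast at key
      rw [map_mul, hπ] at key
      have hval : v ((1 : K) - (t' : K) * (s' : K)) ≤ expZ (n - 1) := by
        have := mul_le_mul_right key (expZ 1)⁻¹
        rw [← mul_assoc, inv_mul_cancel₀ (expZ_ne_zero 1), one_mul] at this
        calc v ((1:K) - (t':K)*(s':K)) ≤ (expZ 1)⁻¹ * expZ n := this
          _ = expZ (n - 1) := by
              rw [show (n : ℤ) = 1 + ((n : ℤ) - 1) by ring, expZ_add]
              rw [← mul_assoc, inv_mul_cancel₀ (expZ_ne_zero 1), one_mul]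
              congr 1
              omega
      have hlt : v ((1 : K) - (t' : K) * (s' : K)) < 1 := by
        apply lt_of_le_of_lt hval
        rw [← expZ_zero, expZ_lt_expZ]
        omega
      have hone : v ((t' : K) * (s' : K)) = 1 := by
        have := Valuation.map_one_sub_of_lt v hlt
        rwa [sub_sub_cancel] at this
      rw [map_mul] at hone
      have hs1 : v (s' : K) = 1 := by
        refine le_antisymm s'.2 ?_
        calc (1 : ZM0) = v (t':K) * v (s':K) := hone.symm
          _ ≤ 1 * v (s':K) := mul_le_mul_left t'.2 _
          _ = v (s':K) := one_mul _
      exact ⟨s', hs1, by rw [← hs, map_mul]⟩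
  have hdπ : (d : K) * (πR : K) ≠ 0 := by
    apply mul_ne_zero
    · intro h; rw [h, map_zero] at hd1; exact zero_ne_one hd1
    · exact pi_ne_zero πR hπ
  have hdπmem : d * πR ∈ mIdeal v := Ideal.mul_mem_left _ d hπmem
  -- the generator of MModule
  set m' : MModule v n := Submodule.Quotient.mk ⟨d * πR, hdπmem⟩ with hm'def
  set f : ResRing v n →ₗ[ResRing v n] MModule v n :=
    LinearMap.toSpanSingleton (ResRing v n) (MModule v n) m' with hfdef
  have hf_mk : ∀ a : v.valuationSubring,
      f (mk a) = Submodule.Quotient.mk ⟨a * (d * πR), Ideal.mul_mem_left _ a hdπmem⟩ := by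
    intro a
    show (mk a) • m' = _
    rw [hmkdef, (mModule_torsion v n).mk_smul, hm'def, ← Submodule.Quotient.mk_smul]
    congr 1
  have hval_mul : ∀ a : v.valuationSubring, v ((a : K) * ((d:K) * (πR:K))) = v (a:K) * expZ 1 := by
    intro a
    rw [map_mul, map_mul, hd1, hπ, one_mul]
  have hbij : Function.Bijective f := by
    constructor
    · rw [← LinearMap.ker_eq_bot (M := ResRing v n)]
      rw [Submodule.eq_bot_iff]
      intro x hx
      obtain ⟨a, rfl⟩ := Ideal.Quotient.mk_surjective x
      rw [LinearMap.mem_ker, hf_mk, Submodule.Quotient.mk_eq_zero, Submodule.mem_comap] at hx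
      have hx' : ((a : v.valuationSubring) * (d * πR)) ∈ (mIdeal v) ^ (n + 1) := hx
      rw [mem_pow_iff πR hπ] at hx'
      push_cast at hx'
      rw [← mul_assoc] at hx'
      rw [show ((a:K) * (d:K) * (πR:K)) = (a:K) * ((d:K) * (πR:K)) by ring, hval_mul a] at hx'
      have ha : v (a : K) ≤ expZ n := by
        have := mul_le_mul_right hx' (expZ 1)⁻¹
        rw [mul_comm (v (a:K)) (expZ 1), ← mul_assoc, inv_mul_cancel₀ (expZ_ne_zero 1),
          one_mul] at this
        calc v (a:K) ≤ (expZ 1)⁻¹ * expZ (n+1) := this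
          _ = expZ n := by
              rw [show ((n:ℤ) + 1) = 1 + (n:ℤ) by ring, expZ_add, ← mul_assoc,
                inv_mul_cancel₀ (expZ_ne_zero 1), one_mul]
      rw [show (mk a : ResRing v n) = Ideal.Quotient.mk (mIdeal v ^ n) a from rfl,
        Ideal.Quotient.eq_zero_iff_mem, mem_pow_iff πR hπ]
      exact ha
    · intro y
      obtain ⟨z, rfl⟩ := Submodule.Quotient.mk_surjective _ y
      obtain ⟨⟨x, hxval⟩, hxm⟩ := z
      rw [mem_mIdeal_iff, ← expZ_zero, lt_expZ_iff] at hxm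
      norm_num at hxm
      have hyval : v (x * ((d:K) * (πR:K))⁻¹) ≤ 1 := by
        rw [map_mul, map_inv₀, map_mul, hd1, hπ, one_mul]
        calc v x * (expZ 1)⁻¹ ≤ expZ 1 * (expZ 1)⁻¹ := mul_le_mul_left hxm _
          _ = 1 := mul_inv_cancel₀ (expZ_ne_zero 1)
      refine ⟨mk ⟨x * ((d:K) * (πR:K))⁻¹, hyval⟩, ?_⟩
      rw [hf_mk]
      congr 1
      ext
      push_cast
      field_simp
      rw [mul_assoc, mul_div_assoc, div_self hdπ, mul_one]
  set e1 : M ≃ₗ[ResRing v n] ResRing v n :=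
    b.equivFun.trans (LinearEquiv.funUnique (Fin 1) (ResRing v n) (ResRing v n)) with he1def
  refine ⟨e1.trans (LinearEquiv.ofBijective f hbij), ?_⟩
  intro x
  have he1x : e1 x = b.repr x 0 := rfl
  obtain ⟨a, ha⟩ := Ideal.Quotient.mk_surjective (I := (mIdeal v)^n) (b.repr x 0)
  have lhs_eq : (e1.trans (LinearEquiv.ofBijective f hbij)) x =
      Submodule.Quotient.mk ⟨a * (d * πR), Ideal.mul_mem_left _ a hdπmem⟩ := by
    show f (e1 x) = _
    rw [he1x, ← ha, hf_mk]
  rw [lhs_eq]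
  have heps : epsN v n (Submodule.Quotient.mk ⟨a * (d * πR), Ideal.mul_mem_left _ a hdπmem⟩) =
      mk (a * (d * πR)) := rfl
  rw [heps]
  conv_rhs => rw [hx_eq x, map_smul, hd2, ← ha]
  rw [smul_eq_mul, map_mul]


end Statement14
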